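/- arXiv:1207.5784 — 2 statements merged into one kernel-verified Lean document; each statement's English description precedes it below -/
import Mathlib

section
/- If p ∈ [0,1] and φ is any analytic self-map of D, then for every f with ‖f‖_{CA_p,*} < ∞, ‖f∘φ‖_{CA_p,*} ≤ ((1+|φ(0)|)/(1-|φ(0)|))^{(1-p)/2} ‖f‖_{CA_p,*}. Hence every composition operator is bounded on CA_p for 0 ≤ p ≤ 1. -/
open Metric Set Complex intervalIntegral Finset


/-- The Möbius involution `σ_a(z) = (a - z)/(1 - conj(a) z)` of the unit disk. -/
noncomputable def mSigma (a z : ℂ) : ℂ := (a - z) / (1 - (starRingEnd ℂ) a * z)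

/-- The squared boundary `L²` norm `∫_T ‖f(ξ)‖² |dξ|` over the unit circle. -/
noncomputable def bnormSq (f : ℂ → ℂ) : ℝ :=
  ∫ θ in (0:ℝ)..(2 * Real.pi), ‖f (Complex.exp (θ * Complex.I))‖ ^ 2

noncomputable def cInt (g : ℂ → ℂ) (r : ℝ) : ℝ :=
  ∫ θ in (0:ℝ)..(2 * Real.pi), ‖g (circleMap 0 r θ)‖ ^ 2

lemma norm_sq_eq_normSq (z : ℂ) : (‖z‖ ^ 2 : ℝ) = Complex.normSq z := by
  rw [Complex.sq_norm]

lemma mobius_normSq (a w : ℂ) :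
    ‖1 - (starRingEnd ℂ) a * w‖ ^ 2 - ‖a - w‖ ^ 2 = (1 - ‖a‖ ^ 2) * (1 - ‖w‖ ^ 2) := by
  simp only [norm_sq_eq_normSq, Complex.normSq_apply]
  simp only [Complex.sub_re, Complex.sub_im, Complex.mul_re, Complex.mul_im, Complex.one_re,
    Complex.one_im, Complex.conj_re, Complex.conj_im]
  ring

lemma mSigma_denom_ne {a z : ℂ} (ha : ‖a‖ < 1) (hz : ‖z‖ ≤ 1) :
    1 - (starRingEnd ℂ) a * z ≠ 0 := by
  intro h
  have h2 : ‖(1:ℂ)‖ ≤ ‖(starRingEnd ℂ) a * z‖ := by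
    have : (1:ℂ) = (starRingEnd ℂ) a * z := by linear_combination h
    rw [← this]
  simp only [norm_one, norm_mul, RCLike.norm_conj] at h2
  nlinarith [norm_nonneg a, norm_nonneg z]

lemma mSigma_key {a w : ℂ} (ha : ‖a‖ < 1) (hw : ‖w‖ ≤ 1) :
    (1 - ‖mSigma a w‖ ^ 2) * ‖1 - (starRingEnd ℂ) a * w‖ ^ 2
      = (1 - ‖a‖ ^ 2) * (1 - ‖w‖ ^ 2) := by
  have hd := mSigma_denom_ne ha hw
  have hd' : ‖1 - (starRingEnd ℂ) a * w‖ ≠ 0 := norm_ne_zero_iff.mpr hd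
  have h2 : ‖mSigma a w‖ ^ 2 = ‖a - w‖ ^ 2 / ‖1 - (starRingEnd ℂ) a * w‖ ^ 2 := by
    rw [mSigma, norm_div]; rw [div_pow]
  rw [h2, ← mobius_normSq a w]
  rw [sub_mul, div_mul_cancel₀ _ (pow_ne_zero 2 hd'), one_mul]

lemma norm_mSigma_le_one {a w : ℂ} (ha : ‖a‖ < 1) (hw : ‖w‖ ≤ 1) : ‖mSigma a w‖ ≤ 1 := by
  have h := mSigma_key ha hw
  have hd' : (0:ℝ) < ‖1 - (starRingEnd ℂ) a * w‖ ^ 2 := by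
    have := norm_ne_zero_iff.mpr (mSigma_denom_ne ha hw)
    positivity
  by_contra hs
  push_neg at hs
  have h1 : (1 - ‖mSigma a w‖ ^ 2) * ‖1 - (starRingEnd ℂ) a * w‖ ^ 2 < 0 :=
    mul_neg_of_neg_of_pos (by nlinarith) hd'
  have hra : (0:ℝ) ≤ 1 - ‖a‖ ^ 2 := by nlinarith [norm_nonneg a]
  have hrw : (0:ℝ) ≤ 1 - ‖w‖ ^ 2 := by nlinarith [norm_nonneg w]
  linarith [mul_nonneg hra hrw]

lemma norm_mSigma_lt_one {a w : ℂ} (ha : ‖a‖ < 1) (hw : ‖w‖ < 1) : ‖mSigma a w‖ < 1 := by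
  have h := mSigma_key ha hw.le
  have hd' : (0:ℝ) < ‖1 - (starRingEnd ℂ) a * w‖ ^ 2 := by
    have := norm_ne_zero_iff.mpr (mSigma_denom_ne ha hw.le)
    positivity
  by_contra hs
  push_neg at hs
  have h1 : (1 - ‖mSigma a w‖ ^ 2) * ‖1 - (starRingEnd ℂ) a * w‖ ^ 2 ≤ 0 :=
    mul_nonpos_of_nonpos_of_nonneg (by nlinarith) hd'.le
  have hra : (0:ℝ) < 1 - ‖a‖ ^ 2 := by nlinarith [norm_nonneg a]
  have hrw : (0:ℝ) < 1 - ‖w‖ ^ 2 := by nlinarith [norm_nonneg w]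
  linarith [mul_pos hra hrw]

lemma one_sub_conj_mul_self_ne {a : ℂ} (ha : ‖a‖ < 1) :
    (1:ℂ) - (starRingEnd ℂ) a * a ≠ 0 := by
  intro h
  have h2 : ((starRingEnd ℂ) a) * a = Complex.normSq a := by
    rw [mul_comm]; exact Complex.mul_conj a
  rw [h2] at h
  have h3 : (Complex.normSq a : ℂ) = 1 := by linear_combination -h
  have h4 : Complex.normSq a = 1 := by exact_mod_cast h3
  nlinarith [norm_sq_eq_normSq a, norm_nonneg a]

lemma mSigma_mSigma {a z : ℂ} (ha : ‖a‖ < 1) (hz : ‖z‖ ≤ 1) :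
    mSigma a (mSigma a z) = z := by
  have hd := mSigma_denom_ne ha hz
  have ha2 := one_sub_conj_mul_self_ne ha
  have e2 : 1 - (starRingEnd ℂ) a * ((a - z) / (1 - (starRingEnd ℂ) a * z))
      = (1 - (starRingEnd ℂ) a * a) / (1 - (starRingEnd ℂ) a * z) := by
    field_simp
    ring
  have e1 : a - (a - z) / (1 - (starRingEnd ℂ) a * z)
      = z * (1 - (starRingEnd ℂ) a * a) / (1 - (starRingEnd ℂ) a * z) := by
    rw [eq_div_iff hd, sub_mul, div_mul_cancel₀ _ hd]; ring
  show (a - (a - z) / (1 - (starRingEnd ℂ) a * z)) /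
      (1 - (starRingEnd ℂ) a * ((a - z) / (1 - (starRingEnd ℂ) a * z))) = z
  rw [e1, e2]
  rw [div_div_eq_mul_div, div_mul_eq_mul_div, mul_div_cancel_right₀ _ hd,
    mul_div_cancel_right₀ _ ha2]

lemma mSigma_self (a : ℂ) : mSigma a a = 0 := by
  simp [mSigma]

lemma mSigma_zero (a : ℂ) : mSigma a 0 = a := by
  simp [mSigma]

lemma mSigma_diff {a : ℂ} (ha : ‖a‖ < 1) :
    DifferentiableOn ℂ (mSigma a) (ball 0 1) := by
  apply DifferentiableOn.div
  · exact (differentiable_const a).differentiableOn.sub differentiable_id.differentiableOn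
  · exact (differentiable_const (1:ℂ)).differentiableOn.sub
      ((differentiable_const _).mul differentiable_id).differentiableOn
  · intro z hz
    exact mSigma_denom_ne ha (le_of_lt (by simpa using mem_ball_zero_iff.mp hz))

lemma mSigma_cont {a : ℂ} (ha : ‖a‖ < 1) :
    ContinuousOn (mSigma a) (closedBall 0 1) := by
  apply ContinuousOn.div
  · fun_prop
  · fun_prop
  · intro z hz
    exact mSigma_denom_ne ha (by simpa using mem_closedBall_zero_iff.mp hz)

lemma meanvalue {H : ℂ → ℂ} (hH : DiffContOnCl ℂ H (ball 0 1)) :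
    (∫ θ in (0:ℝ)..(2 * Real.pi), H (circleMap 0 1 θ)) = (2 * Real.pi : ℝ) * H 0 := by
  have h := hH.circleIntegral_sub_inv_smul (mem_ball_self one_pos)
  rw [circleIntegral] at h
  simp only [deriv_circleMap, smul_eq_mul, sub_zero] at h
  have h2 : ∀ θ : ℝ, circleMap 0 1 θ * I * ((circleMap 0 1 θ)⁻¹ * H (circleMap 0 1 θ))
      = I * H (circleMap 0 1 θ) := by
    intro θ
    have hne : circleMap 0 1 θ ≠ 0 := by
      intro h0
      have := norm_circleMap_zero 1 θ
      rw [h0] at this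
      simp at this
    field_simp
  rw [intervalIntegral.integral_congr (fun θ _ => h2 θ)] at h
  rw [intervalIntegral.integral_const_mul] at h
  exact mul_left_cancel₀ I_ne_zero
    (h.trans (show (2:ℂ) * ↑Real.pi * I * H 0 = I * (((2 * Real.pi : ℝ) : ℂ)  * H 0) by
      push_cast; ring))

lemma circle_ortho (r : ℝ) (n m : ℕ) :
    (∫ θ in (0:ℝ)..(2 * Real.pi),
        (circleMap 0 r θ) ^ n * (starRingEnd ℂ) ((circleMap 0 r θ) ^ m))
      = if n = m then ((2 * Real.pi : ℝ) : ℂ) * (r : ℂ) ^ (n + m) else 0 := by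
  have key : ∀ θ : ℝ, (circleMap 0 r θ) ^ n * (starRingEnd ℂ) ((circleMap 0 r θ) ^ m)
      = (r : ℂ) ^ (n + m) * Complex.exp ((((n : ℂ) - (m : ℂ)) * I) * (θ : ℂ)) := by
    intro θ
    rw [circleMap]
    rw [zero_add, map_pow, map_mul, Complex.conj_ofReal, ← Complex.exp_conj, map_mul,
      Complex.conj_ofReal, Complex.conj_I]
    rw [mul_pow, mul_pow, ← Complex.exp_nat_mul, ← Complex.exp_nat_mul]
    rw [show (((n : ℂ) - (m : ℂ)) * I) * (θ : ℂ)
        = (n : ℂ) * ((θ : ℂ) * I) + (m : ℂ) * ((θ : ℂ) * (-I)) by ring]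
    rw [Complex.exp_add, pow_add]
    ring
  rw [intervalIntegral.integral_congr (fun θ _ => key θ)]
  rw [intervalIntegral.integral_const_mul]
  by_cases h : n = m
  · subst h
    simp only [sub_self, zero_mul, Complex.exp_zero, intervalIntegral.integral_const, sub_zero,
      if_pos rfl]
    rw [real_smul]
    push_cast
    ring
  · have hc : ((n : ℂ) - (m : ℂ)) * I ≠ 0 := by
      apply mul_ne_zero _ I_ne_zero
      intro h0
      apply h
      have : (n : ℂ) = (m : ℂ) := by linear_combination h0
      exact_mod_cast this
    rw [if_neg h]
    rw [integral_exp_mul_complex hc]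
    have h1 : Complex.exp (((n : ℂ) - (m : ℂ)) * I * ((2 * Real.pi : ℝ) : ℂ)) = 1 := by
      have h2 := Complex.exp_int_mul_two_pi_mul_I ((n : ℤ) - (m : ℤ))
      rw [← h2]
      congr 1
      push_cast
      ring
    rw [h1]
    simp

lemma hre_aux (w : ℂ) : (‖w‖ ^ 2 : ℝ) = (w * (starRingEnd ℂ) w).re := by
  rw [Complex.mul_conj', ← Complex.ofReal_pow, Complex.ofReal_re]

lemma parseval_poly (N : ℕ) (c : ℕ → ℂ) (r : ℝ) :
    (∫ θ in (0:ℝ)..(2 * Real.pi),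
        ‖∑ n ∈ Finset.range N, c n * (circleMap 0 r θ) ^ n‖ ^ 2)
      = 2 * Real.pi * ∑ n ∈ Finset.range N, ‖c n‖ ^ 2 * r ^ (2 * n) := by
  have hzc : Continuous (circleMap 0 r) := continuous_circleMap 0 r
  set g : ℝ → ℂ := fun θ => ∑ n ∈ Finset.range N, ∑ m ∈ Finset.range N,
    (c n * (starRingEnd ℂ) (c m)) *
      ((circleMap 0 r θ) ^ n * (starRingEnd ℂ) ((circleMap 0 r θ) ^ m)) with hgdef
  have hterm : ∀ (n m : ℕ), Continuous (fun θ =>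
      (c n * (starRingEnd ℂ) (c m)) *
        ((circleMap 0 r θ) ^ n * (starRingEnd ℂ) ((circleMap 0 r θ) ^ m))) := by
    intro n m
    exact continuous_const.mul ((hzc.pow n).mul (continuous_star.comp (hzc.pow m)))
  have hgc : Continuous g :=
    continuous_finset_sum _ fun n _ => continuous_finset_sum _ fun m _ => hterm n m
  have hexp : ∀ θ : ℝ, (∑ n ∈ Finset.range N, c n * (circleMap 0 r θ) ^ n) *
      (starRingEnd ℂ) (∑ m ∈ Finset.range N, c m * (circleMap 0 r θ) ^ m) = g θ := by
    intro θ
    rw [map_sum, Finset.sum_mul_sum]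
    exact Finset.sum_congr rfl fun n _ => Finset.sum_congr rfl fun m _ => by
      rw [map_mul]; ring
  have step1 : (∫ θ in (0:ℝ)..(2 * Real.pi),
      ‖∑ n ∈ Finset.range N, c n * (circleMap 0 r θ) ^ n‖ ^ 2)
      = (∫ θ in (0:ℝ)..(2 * Real.pi), (g θ).re) := by
    apply intervalIntegral.integral_congr
    intro θ _
    show ‖∑ n ∈ Finset.range N, c n * circleMap 0 r θ ^ n‖ ^ 2 = (g θ).re
    rw [hre_aux, hexp θ]
  have step2 : (∫ θ in (0:ℝ)..(2 * Real.pi), (g θ).re)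
      = (∫ θ in (0:ℝ)..(2 * Real.pi), g θ).re := by
    exact ContinuousLinearMap.intervalIntegral_comp_comm Complex.reCLM
      (hgc.intervalIntegrable _ _)
  have step3 : (∫ θ in (0:ℝ)..(2 * Real.pi), g θ)
      = ∑ n ∈ Finset.range N, (c n * (starRingEnd ℂ) (c n)) *
          (((2 * Real.pi : ℝ) : ℂ) * (r : ℂ) ^ (n + n)) := by
    rw [hgdef]
    rw [intervalIntegral.integral_finset_sum (fun n _ =>
      (continuous_finset_sum _ fun m _ => hterm n m).intervalIntegrable _ _)]
    refine Finset.sum_congr rfl fun n hn => ?_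
    rw [intervalIntegral.integral_finset_sum (fun m _ => (hterm n m).intervalIntegrable _ _)]
    have : ∀ m ∈ Finset.range N,
        (∫ θ in (0:ℝ)..(2 * Real.pi), (c n * (starRingEnd ℂ) (c m)) *
          ((circleMap 0 r θ) ^ n * (starRingEnd ℂ) ((circleMap 0 r θ) ^ m)))
        = if n = m then (c n * (starRingEnd ℂ) (c m)) *
            (((2 * Real.pi : ℝ) : ℂ) * (r : ℂ) ^ (n + m)) else 0 := by
      intro m _
      rw [intervalIntegral.integral_const_mul, circle_ortho, mul_ite, mul_zero]
    rw [Finset.sum_congr rfl this, Finset.sum_ite_eq, if_pos hn]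
  rw [step1, step2, step3, Complex.re_sum]
  have : ∀ n ∈ Finset.range N,
      ((c n * (starRingEnd ℂ) (c n)) * (((2 * Real.pi : ℝ) : ℂ) * (r : ℂ) ^ (n + n))).re
        = ‖c n‖ ^ 2 * (2 * Real.pi * r ^ (n + n)) := by
    intro n _
    rw [Complex.mul_conj', ← Complex.ofReal_pow, ← Complex.ofReal_pow, ← Complex.ofReal_mul,
      ← Complex.ofReal_mul, Complex.ofReal_re]
  rw [Finset.sum_congr rfl this, Finset.mul_sum]
  exact Finset.sum_congr rfl fun n _ => by rw [two_mul]; ring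


lemma subord_poly {ψ : ℂ → ℂ} (hψd : DifferentiableOn ℂ ψ (ball 0 1))
    (hψm : MapsTo ψ (ball 0 1) (ball 0 1)) (hψ0 : ψ 0 = 0)
    {r : ℝ} (hr0 : 0 < r) (hr1 : r < 1) :
    ∀ (N : ℕ) (c : ℕ → ℂ),
      (∫ θ in (0:ℝ)..(2 * Real.pi),
          ‖∑ n ∈ Finset.range N, c n * (ψ (circleMap 0 r θ)) ^ n‖ ^ 2)
        ≤ 2 * Real.pi * ∑ n ∈ Finset.range N, ‖c n‖ ^ 2 * r ^ (2 * n) := by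
  -- preliminary facts
  have hmem : ∀ θ : ℝ, circleMap 0 r θ ∈ ball (0:ℂ) 1 := by
    intro θ
    rw [mem_ball_zero_iff, norm_circleMap_zero, abs_of_pos hr0]
    exact hr1
  have hschwarz : ∀ z : ℂ, ‖z‖ < 1 → ‖ψ z‖ ≤ ‖z‖ := by
    intro z hz
    have := Complex.norm_le_norm_of_mapsTo_ball hψd (hψm.mono_right ball_subset_closedBall) hψ0 (R := 1) (z := z)
      hz
    simpa using this
  have hzr : ∀ θ : ℝ, ‖ψ (circleMap 0 r θ)‖ ≤ r := by
    intro θ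
    have h1 := hschwarz _ (mem_ball_zero_iff.mp (hmem θ))
    have h2 : ‖circleMap 0 r θ‖ = r := by
      rw [norm_circleMap_zero, abs_of_pos hr0]
    rwa [h2] at h1
  have hψc : ContinuousOn ψ (ball 0 1) := hψd.continuousOn
  have hzcont : Continuous fun θ => ψ (circleMap 0 r θ) :=
    hψc.comp_continuous (continuous_circleMap 0 r) hmem
  intro N
  induction N with
  | zero =>
    intro c
    simp
  | succ N ih =>
    intro c
    set z : ℝ → ℂ := fun θ => ψ (circleMap 0 r θ) with hz
    set Q : ℝ → ℂ := fun θ => ∑ n ∈ Finset.range N, c (n + 1) * (z θ) ^ n with hQ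
    have hQcont : Continuous Q :=
      continuous_finset_sum _ fun n _ => continuous_const.mul (hzcont.pow n)
    have hHcont : Continuous fun θ => z θ * Q θ := hzcont.mul hQcont
    have eq1 : ∀ θ : ℝ, (∑ n ∈ Finset.range (N + 1), c n * (z θ) ^ n)
        = z θ * Q θ + c 0 := by
      intro θ
      rw [Finset.sum_range_succ', pow_zero, mul_one, hQ, Finset.mul_sum]
      congr 1
      exact Finset.sum_congr rfl fun n _ => by rw [pow_succ]; ring
    -- expand the square
    have expand : ∀ θ : ℝ, ‖z θ * Q θ + c 0‖ ^ 2
        = ‖z θ * Q θ‖ ^ 2 + 2 * ((starRingEnd ℂ) (c 0) * (z θ * Q θ)).re + ‖c 0‖ ^ 2 := by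
      intro θ
      have := Complex.normSq_add (z θ * Q θ) (c 0)
      have h2 : ∀ w : ℂ, (‖w‖ ^ 2 : ℝ) = Complex.normSq w := fun w => by
        rw [Complex.sq_norm]
      rw [h2, h2, h2, this]
      have h3 : (z θ * Q θ * (starRingEnd ℂ) (c 0)).re
          = ((starRingEnd ℂ) (c 0) * (z θ * Q θ)).re := by rw [mul_comm]
      rw [h3]
      ring
    -- the three integrals
    have int1 : IntervalIntegrable (fun θ => ‖z θ * Q θ‖ ^ 2) MeasureTheory.volume 0 (2 * Real.pi) :=
      ((hHcont.norm.pow 2)).intervalIntegrable _ _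
    have int2 : IntervalIntegrable (fun θ => 2 * ((starRingEnd ℂ) (c 0) * (z θ * Q θ)).re)
        MeasureTheory.volume 0 (2 * Real.pi) :=
      (continuous_const.mul ((Complex.continuous_re.comp (continuous_const.mul hHcont)))).intervalIntegrable _ _
    have int3 : IntervalIntegrable (fun θ => ‖c 0‖ ^ 2) MeasureTheory.volume 0 (2 * Real.pi) :=
      continuous_const.intervalIntegrable _ _
    -- mean value: the cross term vanishes
    have crosszero : (∫ θ in (0:ℝ)..(2 * Real.pi), z θ * Q θ) = 0 := by
      set H : ℂ → ℂ := fun w => ψ ((r : ℂ) * w) *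
        (∑ n ∈ Finset.range N, c (n + 1) * (ψ ((r : ℂ) * w)) ^ n) with hH
      have hmap : ∀ w : ℂ, w ∈ ball (0:ℂ) 1 → (r : ℂ) * w ∈ ball (0:ℂ) 1 := by
        intro w hw
        rw [mem_ball_zero_iff] at *
        rw [norm_mul, Complex.norm_real, Real.norm_eq_abs, abs_of_pos hr0]
        nlinarith [norm_nonneg w]
      have hmapc : ∀ w : ℂ, w ∈ closedBall (0:ℂ) 1 → (r : ℂ) * w ∈ ball (0:ℂ) 1 := by
        intro w hw
        rw [mem_closedBall_zero_iff] at hw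
        rw [mem_ball_zero_iff, norm_mul, Complex.norm_real, Real.norm_eq_abs, abs_of_pos hr0]
        nlinarith [norm_nonneg w]
      have hrd : DifferentiableOn ℂ (fun w : ℂ => ψ ((r : ℂ) * w)) (ball 0 1) :=
        hψd.comp (((differentiable_const ((r:ℂ))).mul differentiable_id).differentiableOn)
          fun w hw => hmap w hw
      have hrc : ContinuousOn (fun w : ℂ => ψ ((r : ℂ) * w)) (closedBall 0 1) :=
        hψc.comp ((continuous_const.mul continuous_id).continuousOn)
          fun w hw => hmapc w hw
      have hHd : DiffContOnCl ℂ H (ball 0 1) := by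
        constructor
        · exact hrd.mul (DifferentiableOn.fun_sum fun n _ =>
            (differentiableOn_const _).mul (hrd.pow n))
        · rw [closure_ball (0:ℂ) one_ne_zero]
          exact hrc.mul (continuousOn_finset_sum _ fun n _ =>
            (continuousOn_const).mul (hrc.pow n))
      have hH0 : H 0 = 0 := by
        simp only [hH, mul_zero, hψ0, zero_mul]
      have heq : ∀ θ : ℝ, z θ * Q θ = H (circleMap 0 1 θ) := by
        intro θ
        have : circleMap 0 r θ = (r : ℂ) * circleMap 0 1 θ := by simp [circleMap]
        simp only [hH, hz, hQ, ← this]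
      rw [intervalIntegral.integral_congr fun θ _ => heq θ]
      rw [meanvalue hHd, hH0, mul_zero]
    -- bound the quadratic term
    have quadbound : (∫ θ in (0:ℝ)..(2 * Real.pi), ‖z θ * Q θ‖ ^ 2)
        ≤ r ^ 2 * (2 * Real.pi * ∑ n ∈ Finset.range N, ‖c (n + 1)‖ ^ 2 * r ^ (2 * n)) := by
      have step : (∫ θ in (0:ℝ)..(2 * Real.pi), ‖z θ * Q θ‖ ^ 2)
          ≤ ∫ θ in (0:ℝ)..(2 * Real.pi), r ^ 2 * ‖Q θ‖ ^ 2 := by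
        apply intervalIntegral.integral_mono_on Real.two_pi_pos.le int1
          ((continuous_const.mul ((hQcont.norm.pow 2))).intervalIntegrable _ _)
        intro θ _
        rw [norm_mul, mul_pow]
        have h1 := hzr θ
        have h2 : ‖z θ‖ ^ 2 ≤ r ^ 2 := by nlinarith [norm_nonneg (z θ)]
        exact mul_le_mul_of_nonneg_right h2 (sq_nonneg _)
      rw [intervalIntegral.integral_const_mul] at step
      calc (∫ θ in (0:ℝ)..(2 * Real.pi), ‖z θ * Q θ‖ ^ 2)
          ≤ r ^ 2 * ∫ θ in (0:ℝ)..(2 * Real.pi), ‖Q θ‖ ^ 2 := step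
        _ ≤ r ^ 2 * (2 * Real.pi * ∑ n ∈ Finset.range N, ‖c (n + 1)‖ ^ 2 * r ^ (2 * n)) := by
            apply mul_le_mul_of_nonneg_left (ih fun n => c (n + 1)) (sq_nonneg r)
    -- put everything together
    rw [intervalIntegral.integral_congr (fun θ _ => by rw [eq1 θ, expand θ] :
      EqOn _ _ (Set.uIcc (0:ℝ) (2 * Real.pi)))]
    rw [intervalIntegral.integral_add (int1.add int2) int3,
      intervalIntegral.integral_add int1 int2]
    have c2 : (∫ θ in (0:ℝ)..(2 * Real.pi), 2 * ((starRingEnd ℂ) (c 0) * (z θ * Q θ)).re) = 0 := by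
      rw [intervalIntegral.integral_const_mul]
      have : (∫ θ in (0:ℝ)..(2 * Real.pi), ((starRingEnd ℂ) (c 0) * (z θ * Q θ)).re)
          = ((starRingEnd ℂ) (c 0) * ∫ θ in (0:ℝ)..(2 * Real.pi), z θ * Q θ).re := by
        rw [← intervalIntegral.integral_const_mul]
        exact ContinuousLinearMap.intervalIntegral_comp_comm Complex.reCLM
          ((continuous_const.mul hHcont).intervalIntegrable _ _)
      rw [this, crosszero, mul_zero, Complex.zero_re, mul_zero]
    have c3 : (∫ θ in (0:ℝ)..(2 * Real.pi), (‖c 0‖ ^ 2 : ℝ)) = 2 * Real.pi * ‖c 0‖ ^ 2 := by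
      rw [intervalIntegral.integral_const, smul_eq_mul, sub_zero]
    rw [c2, c3, add_zero]
    -- compare with the sum on the right
    have rhs_eq : (2 * Real.pi) * ∑ n ∈ Finset.range (N + 1), ‖c n‖ ^ 2 * r ^ (2 * n)
        = r ^ 2 * ((2 * Real.pi) * ∑ n ∈ Finset.range N, ‖c (n + 1)‖ ^ 2 * r ^ (2 * n))
          + 2 * Real.pi * ‖c 0‖ ^ 2 := by
      rw [Finset.sum_range_succ', Nat.mul_zero, pow_zero, mul_one, mul_add]
      congr 1
      rw [Finset.mul_sum, Finset.mul_sum, Finset.mul_sum]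
      exact Finset.sum_congr rfl fun n _ => by rw [Nat.mul_succ, pow_add]; ring
    rw [rhs_eq]
    linarith [quadbound]

lemma integral_sq_le (u v : ℝ → ℂ) (hu : Continuous u) (hv : Continuous v)
    (C δ : ℝ) (hδ0 : 0 ≤ δ) (hC : ∀ θ, ‖v θ‖ ≤ C) (hd : ∀ θ, ‖u θ - v θ‖ ≤ δ) :
    (∫ θ in (0:ℝ)..(2 * Real.pi), ‖u θ‖ ^ 2)
      ≤ (∫ θ in (0:ℝ)..(2 * Real.pi), ‖v θ‖ ^ 2) + 2 * Real.pi * ((2 * C + δ) * δ) := by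
  have key : ∀ θ : ℝ, ‖u θ‖ ^ 2 ≤ ‖v θ‖ ^ 2 + (2 * C + δ) * δ := by
    intro θ
    have h1 : ‖u θ‖ ≤ ‖v θ‖ + δ := by
      have h2 := norm_sub_norm_le (u θ) (v θ)
      have := hd θ
      linarith
    nlinarith [norm_nonneg (u θ), norm_nonneg (v θ), hC θ, hd θ]
  have i1 : IntervalIntegrable (fun θ => ‖u θ‖ ^ 2) MeasureTheory.volume 0 (2 * Real.pi) :=
    (hu.norm.pow 2).intervalIntegrable _ _
  have i2 : IntervalIntegrable (fun θ => ‖v θ‖ ^ 2 + (2 * C + δ) * δ)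
      MeasureTheory.volume 0 (2 * Real.pi) :=
    ((hv.norm.pow 2).add continuous_const).intervalIntegrable _ _
  calc (∫ θ in (0:ℝ)..(2 * Real.pi), ‖u θ‖ ^ 2)
      ≤ ∫ θ in (0:ℝ)..(2 * Real.pi), (‖v θ‖ ^ 2 + (2 * C + δ) * δ) :=
        intervalIntegral.integral_mono_on Real.two_pi_pos.le i1 i2 fun θ _ => key θ
    _ = (∫ θ in (0:ℝ)..(2 * Real.pi), ‖v θ‖ ^ 2) + 2 * Real.pi * ((2 * C + δ) * δ) := by
        rw [intervalIntegral.integral_add (f := fun θ => ‖v θ‖ ^ 2) ((hv.norm.pow 2).intervalIntegrable _ _)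
          (continuous_const.intervalIntegrable _ _), intervalIntegral.integral_const,
          smul_eq_mul, sub_zero]

lemma subord {ψ : ℂ → ℂ} (F : ℂ → ℂ) (hFd : DifferentiableOn ℂ F (ball 0 1))
    (hFc : ContinuousOn F (closedBall 0 1))
    (hψd : DifferentiableOn ℂ ψ (ball 0 1)) (hψc : ContinuousOn ψ (closedBall 0 1))
    (hψm : MapsTo ψ (ball 0 1) (ball 0 1))
    (hψmc : MapsTo ψ (closedBall 0 1) (closedBall 0 1)) (hψ0 : ψ 0 = 0) :
    cInt (F ∘ ψ) 1 ≤ cInt F 1 := by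
  obtain ⟨C₀, hC₀⟩ := (isCompact_closedBall (0:ℂ) 1).exists_bound_of_continuousOn hFc
  set C := max C₀ 0 with hCdef
  have hC : ∀ x ∈ closedBall (0:ℂ) 1, ‖F x‖ ≤ C := fun x hx => (hC₀ x hx).trans (le_max_left _ _)
  have hC0 : 0 ≤ C := le_max_right _ _
  have hπ := Real.pi_pos
  -- membership facts
  have hmem1 : ∀ θ : ℝ, circleMap 0 1 θ ∈ closedBall (0:ℂ) 1 := fun θ =>
    circleMap_mem_closedBall 0 zero_le_one θ
  have hmemr : ∀ {r : ℝ}, 0 ≤ r → r ≤ 1 → ∀ θ : ℝ, circleMap 0 r θ ∈ closedBall (0:ℂ) 1 := by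
    intro r h0 h1 θ
    have := circleMap_mem_closedBall (0:ℂ) h0 θ
    exact closedBall_subset_closedBall h1 this
  have hschwarz : ∀ z : ℂ, ‖z‖ < 1 → ‖ψ z‖ ≤ ‖z‖ := by
    intro z hz
    have := Complex.norm_le_norm_of_mapsTo_ball hψd (hψm.mono_right ball_subset_closedBall) hψ0 (R := 1) (z := z)
      hz
    simpa using this
  -- Step 1 : fixed radius r < 1
  have step1 : ∀ r : ℝ, 0 < r → r < 1 → cInt (F ∘ ψ) r ≤ cInt F r := by
    intro r hr0 hr1
    -- power series for F
    set ρ : ℝ := (1 + r) / 2 with hρdef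
    have hρpos : 0 < ρ := by positivity
    have hρlt : ρ < 1 := by rw [hρdef]; linarith
    have hrρ : r < ρ := by rw [hρdef]; linarith
    have hFdρ : DifferentiableOn ℂ F (closedBall 0 (ρ.toNNReal : ℝ)) := by
      apply hFd.mono
      rw [Real.coe_toNNReal _ hρpos.le]
      exact closedBall_subset_ball hρlt
    have hps := hFdρ.hasFPowerSeriesOnBall (by simpa using hρpos)
    set p := cauchyPowerSeries F 0 (ρ.toNNReal : ℝ) with hpdef
    set r' : NNReal := ((1 + 3 * r) / 4).toNNReal with hr'def
    have hr'pos : (0:ℝ) < (1 + 3 * r) / 4 := by linarith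
    have hrr' : r < ((1 + 3 * r) / 4) := by linarith
    have hr'ρ : ((1 + 3 * r) / 4) < ρ := by rw [hρdef]; linarith
    have hr'lt : (r' : ENNReal) < (ρ.toNNReal : ENNReal) := by
      rw [ENNReal.coe_lt_coe, hr'def]
      exact (Real.toNNReal_lt_toNNReal_iff hρpos).mpr hr'ρ
    have hconv := hps.tendstoUniformlyOn hr'lt
    -- mem facts
    have hmemψ : ∀ θ : ℝ, ψ (circleMap 0 r θ) ∈ ball (0:ℂ) ((r' : ℝ)) := by
      intro θ
      rw [mem_ball_zero_iff]
      have h1 : ‖circleMap 0 r θ‖ = r := by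
        rw [norm_circleMap_zero, abs_of_pos hr0]
      have h2 := hschwarz (circleMap 0 r θ) (by rw [h1]; exact hr1)
      rw [h1] at h2
      have : (r' : ℝ) = (1 + 3 * r) / 4 := Real.coe_toNNReal _ hr'pos.le
      rw [this]
      linarith
    have hmemc : ∀ θ : ℝ, circleMap 0 r θ ∈ ball (0:ℂ) ((r' : ℝ)) := by
      intro θ
      rw [mem_ball_zero_iff, norm_circleMap_zero, abs_of_pos hr0]
      have : (r' : ℝ) = (1 + 3 * r) / 4 := Real.coe_toNNReal _ hr'pos.le
      rw [this]
      linarith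
    -- continuity of compositions
    have hmembr : ∀ θ : ℝ, circleMap 0 r θ ∈ ball (0:ℂ) 1 := by
      intro θ
      rw [mem_ball_zero_iff, norm_circleMap_zero, abs_of_pos hr0]
      exact hr1
    have hψcont : Continuous fun θ => ψ (circleMap 0 r θ) :=
      hψd.continuousOn.comp_continuous (continuous_circleMap 0 r) hmembr
    have hFψcont : Continuous fun θ => F (ψ (circleMap 0 r θ)) := by
      apply hFc.comp_continuous hψcont
      intro θ
      have := hmemψ θ
      rw [mem_ball_zero_iff] at this
      rw [mem_closedBall_zero_iff]
      have h2 : (r':ℝ) ≤ 1 := by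
        rw [Real.coe_toNNReal _ hr'pos.le]; linarith
      linarith
    have hFrcont : Continuous fun θ => F (circleMap 0 r θ) :=
      hFc.comp_continuous (continuous_circleMap 0 r) (fun θ => hmemr hr0.le hr1.le θ)
    -- the ε-argument
    refine le_of_forall_pos_le_add ?_
    intro ε hε
    set δ : ℝ := min 1 (ε / (4 * Real.pi * (2 * C + 3) + 1)) with hδdef
    have hδ0 : 0 < δ := by
      apply lt_min one_pos
      positivity
    have hδ1 : δ ≤ 1 := min_le_left _ _
    have hδ2 : δ * (4 * Real.pi * (2 * C + 3) + 1) ≤ ε := by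
      have h3 : δ ≤ ε / (4 * Real.pi * (2 * C + 3) + 1) := min_le_right _ _
      have h4 : (0:ℝ) < 4 * Real.pi * (2 * C + 3) + 1 := by positivity
      rw [← le_div_iff₀ h4]
      exact h3
    obtain ⟨N, hN⟩ := (Filter.eventually_atTop.mp
      ((Metric.tendstoUniformlyOn_iff.mp hconv) δ hδ0))
    have hNs := hN N le_rfl
    set c : ℕ → ℂ := fun n => p.coeff n with hcdef
    set S : ℂ → ℂ := fun w => ∑ n ∈ Finset.range N, c n * w ^ n with hSdef
    have hSP : ∀ w : ℂ, p.partialSum N w = S w := by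
      intro w
      rw [FormalMultilinearSeries.partialSum, hSdef]
      exact Finset.sum_congr rfl fun n _ => by
        rw [FormalMultilinearSeries.apply_eq_pow_smul_coeff, smul_eq_mul, mul_comm]
    have hclose : ∀ y : ℂ, y ∈ ball (0:ℂ) ((r':ℝ)) → ‖F y - S y‖ ≤ δ := by
      intro y hy
      have := hNs y hy
      rw [zero_add, hSP] at this
      rw [← dist_eq_norm]
      exact this.le
    have hScont : Continuous S := continuous_finset_sum _ fun n _ =>
      continuous_const.mul (continuous_pow n)
    -- first comparison
    have comp1 := integral_sq_le (fun θ => F (ψ (circleMap 0 r θ)))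
      (fun θ => S (ψ (circleMap 0 r θ))) hFψcont (hScont.comp hψcont) (C + δ) δ hδ0.le
      (fun θ => by
        have h5 := hclose _ (hmemψ θ)
        have h6 : ψ (circleMap 0 r θ) ∈ closedBall (0:ℂ) 1 := by
          have := hmemψ θ
          rw [mem_ball_zero_iff] at this
          rw [mem_closedBall_zero_iff]
          have h2 : (r':ℝ) ≤ 1 := by
            rw [Real.coe_toNNReal _ hr'pos.le]; linarith
          linarith
        have h7 := hC _ h6
        have h8 := norm_sub_norm_le (S (ψ (circleMap 0 r θ))) (F (ψ (circleMap 0 r θ)))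
        rw [norm_sub_rev] at h8
        linarith)
      (fun θ => hclose _ (hmemψ θ))
    -- middle: subordination for the polynomial + parseval
    have comp2 : (∫ θ in (0:ℝ)..(2 * Real.pi), ‖S (ψ (circleMap 0 r θ))‖ ^ 2)
        ≤ ∫ θ in (0:ℝ)..(2 * Real.pi), ‖S (circleMap 0 r θ)‖ ^ 2 := by
      rw [hSdef]
      calc (∫ θ in (0:ℝ)..(2 * Real.pi),
          ‖∑ n ∈ Finset.range N, c n * (ψ (circleMap 0 r θ)) ^ n‖ ^ 2)
          ≤ 2 * Real.pi * ∑ n ∈ Finset.range N, ‖c n‖ ^ 2 * r ^ (2 * n) :=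
            subord_poly hψd hψm hψ0 hr0 hr1 N c
        _ = _ := (parseval_poly N c r).symm
    -- third comparison
    have comp3 := integral_sq_le (fun θ => S (circleMap 0 r θ))
      (fun θ => F (circleMap 0 r θ)) (hScont.comp (continuous_circleMap 0 r)) hFrcont C δ hδ0.le
      (fun θ => hC _ (hmemr hr0.le hr1.le θ))
      (fun θ => by
        have h5 := hclose _ (hmemc θ)
        rw [norm_sub_rev] at h5
        exact h5)
    -- combine
    have htotal : 2 * Real.pi * ((2 * (C + δ) + δ) * δ) + 2 * Real.pi * ((2 * C + δ) * δ) ≤ ε := by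
      have hδδ : δ * δ ≤ δ := mul_le_of_le_one_right hδ0.le hδ1
      nlinarith [hπ.le, hδ0.le, hC0, mul_le_mul_of_nonneg_left hδδ hπ.le, hδ2]
    calc cInt (F ∘ ψ) r
        = ∫ θ in (0:ℝ)..(2 * Real.pi), ‖F (ψ (circleMap 0 r θ))‖ ^ 2 := rfl
      _ ≤ (∫ θ in (0:ℝ)..(2 * Real.pi), ‖S (ψ (circleMap 0 r θ))‖ ^ 2)
            + 2 * Real.pi * ((2 * (C + δ) + δ) * δ) := comp1
      _ ≤ (∫ θ in (0:ℝ)..(2 * Real.pi), ‖S (circleMap 0 r θ)‖ ^ 2)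
            + 2 * Real.pi * ((2 * (C + δ) + δ) * δ) := by linarith
      _ ≤ ((∫ θ in (0:ℝ)..(2 * Real.pi), ‖F (circleMap 0 r θ)‖ ^ 2)
            + 2 * Real.pi * ((2 * C + δ) * δ)) + 2 * Real.pi * ((2 * (C + δ) + δ) * δ) := by
              linarith
      _ ≤ cInt F r + ε := by
          have : cInt F r = ∫ θ in (0:ℝ)..(2 * Real.pi), ‖F (circleMap 0 r θ)‖ ^ 2 := rfl
          linarith
  -- Step 2 : pass to the boundary
  have hGc : ContinuousOn (F ∘ ψ) (closedBall (0:ℂ) 1) := hFc.comp hψc hψmc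
  have hGC : ∀ x ∈ closedBall (0:ℂ) 1, ‖(F ∘ ψ) x‖ ≤ C := fun x hx => hC _ (hψmc hx)
  have hG1cont : Continuous fun θ => (F ∘ ψ) (circleMap 0 1 θ) :=
    hGc.comp_continuous (continuous_circleMap 0 1) hmem1
  have hF1cont : Continuous fun θ => F (circleMap 0 1 θ) :=
    hFc.comp_continuous (continuous_circleMap 0 1) hmem1
  have hucF := Metric.uniformContinuousOn_iff.mp
    ((isCompact_closedBall (0:ℂ) 1).uniformContinuousOn_of_continuous hFc)
  have hucG := Metric.uniformContinuousOn_iff.mp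
    ((isCompact_closedBall (0:ℂ) 1).uniformContinuousOn_of_continuous hGc)
  refine le_of_forall_pos_le_add ?_
  intro ε hε
  set ε' : ℝ := min 1 (ε / (8 * Real.pi * (C + 1) + 1)) with hε'def
  have hε'0 : 0 < ε' := lt_min one_pos (by positivity)
  have hε'1 : ε' ≤ 1 := min_le_left _ _
  have hε'2 : ε' * (8 * Real.pi * (C + 1) + 1) ≤ ε := by
    have h3 : ε' ≤ ε / (8 * Real.pi * (C + 1) + 1) := min_le_right _ _
    have h4 : (0:ℝ) < 8 * Real.pi * (C + 1) + 1 := by positivity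
    rw [← le_div_iff₀ h4]
    exact h3
  obtain ⟨δF, hδF0, hδF⟩ := hucF ε' hε'0
  obtain ⟨δG, hδG0, hδG⟩ := hucG ε' hε'0
  set δ : ℝ := min δF δG with hδdef
  have hδ0 : 0 < δ := lt_min hδF0 hδG0
  set r : ℝ := max (1/2) (1 - δ/2) with hrdef
  have hr0 : 0 < r := lt_of_lt_of_le one_half_pos (le_max_left _ _)
  have hr1 : r < 1 := by
    apply max_lt (by norm_num)
    linarith
  have hrd : 1 - r ≤ δ / 2 := by
    have := le_max_right (1/2 : ℝ) (1 - δ/2)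
    linarith
  have hdist : ∀ θ : ℝ, dist (circleMap 0 r θ) (circleMap 0 1 θ) < δ := by
    intro θ
    rw [dist_eq_norm]
    have : circleMap 0 r θ - circleMap 0 1 θ = ((r:ℂ) - 1) * Complex.exp (θ * Complex.I) := by
      simp [circleMap]
      ring
    rw [this, norm_mul]
    have h5 : ‖Complex.exp ((θ:ℂ) * Complex.I)‖ = 1 := by
      rw [Complex.norm_exp_ofReal_mul_I]
    rw [h5, mul_one]
    have h6 : ((r:ℂ) - 1) = ((r - 1 : ℝ) : ℂ) := by push_cast; ring
    rw [h6, Complex.norm_real, Real.norm_eq_abs, abs_of_nonpos (by linarith)]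
    linarith
  -- comparison at radius r vs radius 1
  have comp1 := integral_sq_le (fun θ => (F ∘ ψ) (circleMap 0 1 θ))
    (fun θ => (F ∘ ψ) (circleMap 0 r θ)) hG1cont
    (hGc.comp_continuous (continuous_circleMap 0 r) (fun θ => hmemr hr0.le hr1.le θ))
    C ε' hε'0.le
    (fun θ => hGC _ (hmemr hr0.le hr1.le θ))
    (fun θ => by
      rw [← dist_eq_norm]
      exact (hδG _ (hmem1 θ) _ (hmemr hr0.le hr1.le θ)
        (by rw [dist_comm]; exact lt_of_lt_of_le (hdist θ) (min_le_right _ _))).le)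
  have comp3 := integral_sq_le (fun θ => F (circleMap 0 r θ))
    (fun θ => F (circleMap 0 1 θ))
    (hFc.comp_continuous (continuous_circleMap 0 r) (fun θ => hmemr hr0.le hr1.le θ))
    hF1cont C ε' hε'0.le
    (fun θ => hC _ (hmem1 θ))
    (fun θ => by
      rw [← dist_eq_norm]
      exact (hδF _ (hmemr hr0.le hr1.le θ) _ (hmem1 θ)
        (lt_of_lt_of_le (hdist θ) (min_le_left _ _))).le)
  have hs1 := step1 r hr0 hr1
  have htotal : 2 * Real.pi * ((2 * C + ε') * ε') + 2 * Real.pi * ((2 * C + ε') * ε') ≤ ε := by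
    have hεε : ε' * ε' ≤ ε' := mul_le_of_le_one_right hε'0.le hε'1
    nlinarith [hπ.le, hε'0.le, hC0, mul_le_mul_of_nonneg_left hεε hπ.le, hε'2]
  have e1 : cInt (F ∘ ψ) 1 = ∫ θ in (0:ℝ)..(2 * Real.pi), ‖(F ∘ ψ) (circleMap 0 1 θ)‖ ^ 2 := rfl
  have e2 : cInt (F ∘ ψ) r = ∫ θ in (0:ℝ)..(2 * Real.pi), ‖(F ∘ ψ) (circleMap 0 r θ)‖ ^ 2 := rfl
  have e3 : cInt F r = ∫ θ in (0:ℝ)..(2 * Real.pi), ‖F (circleMap 0 r θ)‖ ^ 2 := rfl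
  have e4 : cInt F 1 = ∫ θ in (0:ℝ)..(2 * Real.pi), ‖F (circleMap 0 1 θ)‖ ^ 2 := rfl
  rw [e1, e4]
  rw [e2, e3] at hs1
  linarith

lemma schwarz_pick (φ : ℂ → ℂ) (hφd : DifferentiableOn ℂ φ (ball 0 1))
    (hφm : MapsTo φ (ball 0 1) (ball 0 1)) {a : ℂ} (ha : a ∈ ball (0:ℂ) 1) :
    1 - ‖a‖ ^ 2 ≤ (1 + ‖φ 0‖) / (1 - ‖φ 0‖) * (1 - ‖φ a‖ ^ 2) := by
  have ha1 : ‖a‖ < 1 := mem_ball_zero_iff.mp ha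
  have hc1 : ‖φ 0‖ < 1 := mem_ball_zero_iff.mp (hφm (mem_ball_zero_iff.mpr (by norm_num)))
  set c : ℂ := φ 0 with hcdef
  -- the composed map h = σ_c ∘ φ
  set h : ℂ → ℂ := fun z => mSigma c (φ z) with hhdef
  have hhd : DifferentiableOn ℂ h (ball 0 1) :=
    (mSigma_diff hc1).comp hφd hφm
  have hhm : MapsTo h (ball 0 1) (ball 0 1) := by
    intro z hz
    exact mem_ball_zero_iff.mpr (norm_mSigma_lt_one hc1 (mem_ball_zero_iff.mp (hφm hz)))
  have hh0 : h 0 = 0 := by rw [hhdef]; exact mSigma_self c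
  have hschwarz : ‖h a‖ ≤ ‖a‖ := by
    have := Complex.norm_le_norm_of_mapsTo_ball hhd (hhm.mono_right ball_subset_closedBall) hh0 (R := 1) (z := a)
      ha1
    simpa using this
  set u : ℂ := h a with hudef
  have hu1 : ‖u‖ < 1 := lt_of_le_of_lt hschwarz ha1
  have hback : φ a = mSigma c u := by
    rw [hudef, hhdef]
    exact (mSigma_mSigma hc1 (mem_ball_zero_iff.mp (hφm ha)).le).symm
  have hkey := mSigma_key hc1 hu1.le
  rw [← hback] at hkey
  -- denominator bounds
  have hDle : ‖1 - (starRingEnd ℂ) c * u‖ ≤ 1 + ‖c‖ := by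
    calc ‖1 - (starRingEnd ℂ) c * u‖ ≤ ‖(1:ℂ)‖ + ‖(starRingEnd ℂ) c * u‖ := norm_sub_le _ _
      _ = 1 + ‖c‖ * ‖u‖ := by rw [norm_one, norm_mul, RCLike.norm_conj]
      _ ≤ 1 + ‖c‖ := by nlinarith [norm_nonneg c, norm_nonneg u]
  have hDpos : 0 < ‖1 - (starRingEnd ℂ) c * u‖ :=
    norm_pos_iff.mpr (mSigma_denom_ne hc1 hu1.le)
  have hgoal' : (1 - ‖a‖ ^ 2) * (1 - ‖c‖) ≤ (1 + ‖c‖) * (1 - ‖φ a‖ ^ 2) := by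
    have hu_a : 1 - ‖a‖ ^ 2 ≤ 1 - ‖u‖ ^ 2 := by nlinarith [norm_nonneg u, norm_nonneg a]
    have hD2 : ‖1 - (starRingEnd ℂ) c * u‖ ^ 2 ≤ (1 + ‖c‖) ^ 2 := by
      nlinarith [hDpos, norm_nonneg c]
    have hφa2 : 0 ≤ 1 - ‖φ a‖ ^ 2 := by
      have := mem_ball_zero_iff.mp (hφm ha)
      nlinarith [norm_nonneg (φ a)]
    have hu2 : 0 ≤ 1 - ‖u‖ ^ 2 := by nlinarith [norm_nonneg u]
    have hc1' : 0 ≤ 1 - ‖c‖ := by linarith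
    set D := ‖1 - (starRingEnd ℂ) c * u‖ with hDdef
    have s1 : (1 - ‖a‖ ^ 2) * (1 - ‖c‖) * D ^ 2 ≤ (1 - ‖u‖ ^ 2) * (1 - ‖c‖) * D ^ 2 :=
      mul_le_mul_of_nonneg_right (mul_le_mul_of_nonneg_right hu_a hc1') (sq_nonneg D)
    have s2 : (1 - ‖u‖ ^ 2) * (1 - ‖c‖) * D ^ 2 ≤ (1 - ‖u‖ ^ 2) * (1 - ‖c‖) * (1 + ‖c‖) ^ 2 :=
      mul_le_mul_of_nonneg_left hD2 (mul_nonneg hu2 hc1')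
    have s3 : (1 - ‖u‖ ^ 2) * (1 - ‖c‖) * (1 + ‖c‖) ^ 2
        = (1 + ‖c‖) * ((1 - ‖c‖ ^ 2) * (1 - ‖u‖ ^ 2)) := by ring
    have s4 : (1 + ‖c‖) * ((1 - ‖c‖ ^ 2) * (1 - ‖u‖ ^ 2))
        = ((1 + ‖c‖) * (1 - ‖φ a‖ ^ 2)) * D ^ 2 := by rw [← hkey]; ring
    have s5 : (1 - ‖a‖ ^ 2) * (1 - ‖c‖) * D ^ 2 ≤ ((1 + ‖c‖) * (1 - ‖φ a‖ ^ 2)) * D ^ 2 := by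
      rw [← s4, ← s3]
      exact s1.trans s2
    exact le_of_mul_le_mul_right s5 (by positivity)
  have hcpos : 0 < 1 - ‖c‖ := by linarith
  rw [div_mul_eq_mul_div, le_div_iff₀ hcpos]
  linarith [hgoal']

/-- If `p ∈ [0,1]` and `φ` is any analytic self-map of the disk, then
`‖f∘φ‖_{CA_p,*} ≤ ((1+|φ(0)|)/(1-|φ(0)|))^{(1-p)/2} ‖f‖_{CA_p,*}`; in particular every
composition operator is bounded on `CA_p` for `0 ≤ p ≤ 1`. -/
theorem composition_bounded_on_CAp (p : ℝ) (hp : p ∈ Set.Icc (0:ℝ) 1)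
    (φ f : ℂ → ℂ) (M : ℝ)
    (hφd : DifferentiableOn ℂ φ (Metric.ball (0:ℂ) 1))
    (hφm : Set.MapsTo φ (Metric.ball (0:ℂ) 1) (Metric.ball (0:ℂ) 1))
    (hφc : ContinuousOn φ (Metric.closedBall (0:ℂ) 1))
    (hφmc : Set.MapsTo φ (Metric.closedBall (0:ℂ) 1) (Metric.closedBall (0:ℂ) 1))
    (hfd : DifferentiableOn ℂ f (Metric.ball (0:ℂ) 1))
    (hfc : ContinuousOn f (Metric.closedBall (0:ℂ) 1))
    (hfM : ∀ a ∈ Metric.ball (0:ℂ) 1,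
      (1 - ‖a‖ ^ 2) ^ ((1 - p) / 2) *
        Real.sqrt (bnormSq fun ξ => f (mSigma a ξ) - f a) ≤ M) :
    ∀ a ∈ Metric.ball (0:ℂ) 1,
      (1 - ‖a‖ ^ 2) ^ ((1 - p) / 2) *
        Real.sqrt (bnormSq fun ξ => f (φ (mSigma a ξ)) - f (φ a)) ≤
      ((1 + ‖φ 0‖) / (1 - ‖φ 0‖)) ^ ((1 - p) / 2) * M := by
  intro a ha
  have ha1 : ‖a‖ < 1 := mem_ball_zero_iff.mp ha
  have hb : φ a ∈ ball (0:ℂ) 1 := hφm ha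
  have hb1 : ‖φ a‖ < 1 := mem_ball_zero_iff.mp hb
  set b : ℂ := φ a with hbdef
  set ψ : ℂ → ℂ := fun z => mSigma b (φ (mSigma a z)) with hψdef
  set F : ℂ → ℂ := fun w => f (mSigma b w) - f b with hFdef
  -- mapping properties of σ_a, σ_b
  have hma : MapsTo (mSigma a) (ball (0:ℂ) 1) (ball (0:ℂ) 1) := fun z hz =>
    mem_ball_zero_iff.mpr (norm_mSigma_lt_one ha1 (mem_ball_zero_iff.mp hz))
  have hmac : MapsTo (mSigma a) (closedBall (0:ℂ) 1) (closedBall (0:ℂ) 1) := fun z hz =>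
    mem_closedBall_zero_iff.mpr (norm_mSigma_le_one ha1 (mem_closedBall_zero_iff.mp hz))
  have hmb : MapsTo (mSigma b) (ball (0:ℂ) 1) (ball (0:ℂ) 1) := fun z hz =>
    mem_ball_zero_iff.mpr (norm_mSigma_lt_one hb1 (mem_ball_zero_iff.mp hz))
  have hmbc : MapsTo (mSigma b) (closedBall (0:ℂ) 1) (closedBall (0:ℂ) 1) := fun z hz =>
    mem_closedBall_zero_iff.mpr (norm_mSigma_le_one hb1 (mem_closedBall_zero_iff.mp hz))
  -- properties of ψ
  have hψd : DifferentiableOn ℂ ψ (ball 0 1) :=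
    (mSigma_diff hb1).comp (hφd.comp (mSigma_diff ha1) hma) (hφm.comp hma)
  have hψc : ContinuousOn ψ (closedBall 0 1) :=
    (mSigma_cont hb1).comp (hφc.comp (mSigma_cont ha1) hmac) (hφmc.comp hmac)
  have hψm : MapsTo ψ (ball 0 1) (ball 0 1) := hmb.comp (hφm.comp hma)
  have hψmc : MapsTo ψ (closedBall 0 1) (closedBall 0 1) := hmbc.comp (hφmc.comp hmac)
  have hψ0 : ψ 0 = 0 := by
    rw [hψdef]
    simp only [mSigma_zero a, ← hbdef, mSigma_self]
  -- properties of F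
  have hFd : DifferentiableOn ℂ F (ball 0 1) :=
    ((hfd.comp (mSigma_diff hb1) hmb).sub (differentiableOn_const _))
  have hFc : ContinuousOn F (closedBall 0 1) :=
    ((hfc.comp (mSigma_cont hb1) hmbc).sub continuousOn_const)
  -- the subordination inequality
  have hsub := subord F hFd hFc hψd hψc hψm hψmc hψ0
  -- identify the integrals
  have hcm : ∀ θ : ℝ, circleMap 0 1 θ = Complex.exp ((θ:ℂ) * Complex.I) := by
    intro θ; simp [circleMap]
  have hcirc : ∀ θ : ℝ, ‖Complex.exp ((θ:ℂ) * Complex.I)‖ = 1 := by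
    intro θ; rw [Complex.norm_exp_ofReal_mul_I]
  have hid1 : bnormSq (fun ξ => f (φ (mSigma a ξ)) - f (φ a)) = cInt (F ∘ ψ) 1 := by
    rw [bnormSq, cInt]
    apply intervalIntegral.integral_congr
    intro θ _
    have hξ : ‖Complex.exp ((θ:ℂ) * Complex.I)‖ = 1 := hcirc θ
    set ξ := Complex.exp ((θ:ℂ) * Complex.I) with hξdef
    have h1 : ‖mSigma a ξ‖ ≤ 1 := norm_mSigma_le_one ha1 hξ.le
    have h2 : ‖φ (mSigma a ξ)‖ ≤ 1 :=
      mem_closedBall_zero_iff.mp (hφmc (mem_closedBall_zero_iff.mpr h1))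
    have h3 : (F ∘ ψ) (circleMap 0 1 θ) = f (φ (mSigma a ξ)) - f b := by
      rw [hcm θ, ← hξdef]
      show F (mSigma b (φ (mSigma a ξ))) = _
      rw [hFdef]
      simp only
      rw [mSigma_mSigma hb1 h2]
    show ‖f (φ (mSigma a ξ)) - f (φ a)‖ ^ 2 = ‖(F ∘ ψ) (circleMap 0 1 θ)‖ ^ 2
    rw [h3, ← hbdef]
  have hid2 : bnormSq (fun ξ => f (mSigma b ξ) - f b) = cInt F 1 := by
    rw [bnormSq, cInt]
    apply intervalIntegral.integral_congr
    intro θ _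
    show ‖f (mSigma b (Complex.exp ((θ:ℂ) * Complex.I))) - f b‖ ^ 2
      = ‖F (circleMap 0 1 θ)‖ ^ 2
    rw [hcm θ]
  -- numerical part
  set e : ℝ := (1 - p) / 2 with hedef
  have he : 0 ≤ e := by
    obtain ⟨hp0, hp1⟩ := hp
    rw [hedef]; linarith
  have hx0 : (0:ℝ) ≤ 1 - ‖a‖ ^ 2 := by nlinarith [norm_nonneg a]
  have hy0 : (0:ℝ) ≤ 1 - ‖b‖ ^ 2 := by nlinarith [norm_nonneg b]
  have hc1 : ‖φ 0‖ < 1 := mem_ball_zero_iff.mp (hφm (mem_ball_zero_iff.mpr (by norm_num)))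
  have hK0 : (0:ℝ) ≤ (1 + ‖φ 0‖) / (1 - ‖φ 0‖) := by
    apply div_nonneg
    · linarith [norm_nonneg (φ 0)]
    · linarith
  have hpick := schwarz_pick φ hφd hφm ha
  have hrpow : (1 - ‖a‖ ^ 2) ^ e
      ≤ ((1 + ‖φ 0‖) / (1 - ‖φ 0‖)) ^ e * (1 - ‖b‖ ^ 2) ^ e := by
    calc (1 - ‖a‖ ^ 2) ^ e
        ≤ ((1 + ‖φ 0‖) / (1 - ‖φ 0‖) * (1 - ‖b‖ ^ 2)) ^ e :=
          Real.rpow_le_rpow hx0 hpick he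
      _ = ((1 + ‖φ 0‖) / (1 - ‖φ 0‖)) ^ e * (1 - ‖b‖ ^ 2) ^ e :=
          Real.mul_rpow hK0 hy0
  have hsqrt : Real.sqrt (bnormSq fun ξ => f (φ (mSigma a ξ)) - f (φ a))
      ≤ Real.sqrt (bnormSq fun ξ => f (mSigma b ξ) - f b) := by
    apply Real.sqrt_le_sqrt
    rw [hid1, hid2]
    exact hsub
  have hfMb := hfM b hb
  calc (1 - ‖a‖ ^ 2) ^ e * Real.sqrt (bnormSq fun ξ => f (φ (mSigma a ξ)) - f (φ a))
      ≤ (1 - ‖a‖ ^ 2) ^ e * Real.sqrt (bnormSq fun ξ => f (mSigma b ξ) - f b) :=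
        mul_le_mul_of_nonneg_left hsqrt (Real.rpow_nonneg hx0 e)
    _ ≤ (((1 + ‖φ 0‖) / (1 - ‖φ 0‖)) ^ e * (1 - ‖b‖ ^ 2) ^ e) *
          Real.sqrt (bnormSq fun ξ => f (mSigma b ξ) - f b) :=
        mul_le_mul_of_nonneg_right hrpow (Real.sqrt_nonneg _)
    _ = ((1 + ‖φ 0‖) / (1 - ‖φ 0‖)) ^ e *
          ((1 - ‖b‖ ^ 2) ^ e * Real.sqrt (bnormSq fun ξ => f (mSigma b ξ) - f b)) := by
        ring
    _ ≤ ((1 + ‖φ 0‖) / (1 - ‖φ 0‖)) ^ e * M :=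
        mul_le_mul_of_nonneg_left hfMb (Real.rpow_nonneg hK0 e)
end

section
/- For p ∈ (1,2), a composition operator C_φ (for φ an analytic self-map of D) is bounded on the Campanato space CA_p (= Lipschitz space A_{(p-1)/2}) if and only if sup_{a∈D} ((1-|a|^2)/(1-|φ(a)|^2))^{(3-p)/2} |φ'(a)| < ∞. -/
open Complex Metric

private lemma ball_pos' {a : ℂ} (ha : a ∈ Metric.ball (0:ℂ) 1) : 0 < 1 - ‖a‖ ^ 2 := by
  rw [mem_ball_zero_iff] at ha
  nlinarith [norm_nonneg a]

/-- For `p ∈ (1,2)`, the composition operator `C_φ` (for an analytic self-map `φ` of the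
unit disk) is bounded on the Lipschitz space `A_{(p-1)/2}` (equal to the Campanato space
`CA_p`), with seminorm `sup_{a∈D} (1-|a|²)^{(3-p)/2}|f'(a)|`, if and only if
`sup_{a∈D} ((1-|a|²)/(1-|φ(a)|²))^{(3-p)/2} |φ'(a)| < ∞`. -/
theorem composition_bounded_lipschitz_iff (p : ℝ) (hp : p ∈ Set.Ioo (1:ℝ) 2) (φ : ℂ → ℂ)
    (hφd : DifferentiableOn ℂ φ (Metric.ball (0:ℂ) 1))
    (hφm : Set.MapsTo φ (Metric.ball (0:ℂ) 1) (Metric.ball (0:ℂ) 1)) :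
    (∃ C > 0, ∀ f : ℂ → ℂ, DifferentiableOn ℂ f (Metric.ball (0:ℂ) 1) →
      ∀ M : ℝ,
        (∀ a ∈ Metric.ball (0:ℂ) 1, (1 - ‖a‖ ^ 2) ^ ((3 - p) / 2) * ‖deriv f a‖ ≤ M) →
        ∀ a ∈ Metric.ball (0:ℂ) 1,
          (1 - ‖a‖ ^ 2) ^ ((3 - p) / 2) * ‖deriv (f ∘ φ) a‖ ≤ C * M) ↔
    (∃ K : ℝ, ∀ a ∈ Metric.ball (0:ℂ) 1,
      ((1 - ‖a‖ ^ 2) / (1 - ‖φ a‖ ^ 2)) ^ ((3 - p) / 2) * ‖deriv φ a‖ ≤ K) := by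
  obtain ⟨hp1, hp2⟩ := hp
  set α : ℝ := (3 - p) / 2 with hαdef
  have hα0 : 0 < α := by simp only [hαdef]; linarith
  have hα1 : α < 1 := by simp only [hαdef]; linarith
  constructor
  · rintro ⟨C, hC, hbound⟩
    refine ⟨C * 2 ^ α, fun a ha => ?_⟩
    have hfa : φ a ∈ Metric.ball (0:ℂ) 1 := hφm ha
    have hA := ball_pos' ha
    have hB := ball_pos' hfa
    by_cases hb : φ a = 0
    · -- use the identity function
      have hid : ∀ x ∈ Metric.ball (0:ℂ) 1,
          (1 - ‖x‖ ^ 2) ^ α * ‖deriv (fun z : ℂ => z) x‖ ≤ 1 := by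
        intro x hx
        rw [deriv_id'', norm_one, mul_one]
        exact Real.rpow_le_one (ball_pos' hx).le (by nlinarith [sq_nonneg ‖x‖]) hα0.le
      have h := hbound (fun z => z) differentiable_id.differentiableOn 1 hid a ha
      have hco : ((fun z : ℂ => z) ∘ φ) = φ := rfl
      rw [hco, mul_one] at h
      have h2 : (1:ℝ) ≤ 2 ^ α := Real.one_le_rpow (by norm_num) hα0.le
      calc ((1 - ‖a‖ ^ 2) / (1 - ‖φ a‖ ^ 2)) ^ α * ‖deriv φ a‖
          = (1 - ‖a‖ ^ 2) ^ α * ‖deriv φ a‖ := by rw [hb]; norm_num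
        _ ≤ C := h
        _ ≤ C * 2 ^ α := by nlinarith
    · -- test function with derivative (1 - conj b * z) ^ (-α)
      set b := φ a with hbdef
      set c : ℂ := 1 - (α : ℂ) with hcdef
      have hc0 : c ≠ 0 := by
        simp only [hcdef, sub_ne_zero]
        intro h
        have : (α : ℝ) = 1 := by exact_mod_cast h.symm
        linarith
      have hcb : (starRingEnd ℂ) b ≠ 0 := by simpa using hb
      set f : ℂ → ℂ := fun z => -((1 - (starRingEnd ℂ) b * z) ^ c) / ((starRingEnd ℂ) b * c)
        with hfdef
      have hwre : ∀ z ∈ Metric.ball (0:ℂ) 1, 0 < (1 - (starRingEnd ℂ) b * z).re := by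
        intro z hz
        rw [mem_ball_zero_iff] at hz
        have hb1 : ‖b‖ < 1 := mem_ball_zero_iff.mp hfa
        have h1 : ((starRingEnd ℂ) b * z).re ≤ ‖(starRingEnd ℂ) b * z‖ := by
          exact Complex.re_le_norm _
        have h2 : ‖(starRingEnd ℂ) b * z‖ = ‖b‖ * ‖z‖ := by
          rw [norm_mul]; simp
        simp only [Complex.sub_re, Complex.one_re]
        nlinarith [norm_nonneg b, norm_nonneg z]
      have hderiv : ∀ z ∈ Metric.ball (0:ℂ) 1,
          HasDerivAt f ((1 - (starRingEnd ℂ) b * z) ^ (-(α:ℂ))) z := by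
        intro z hz
        have h1 : HasDerivAt (fun w : ℂ => 1 - (starRingEnd ℂ) b * w)
            (-((starRingEnd ℂ) b)) z := by
          simpa using ((hasDerivAt_id z).const_mul ((starRingEnd ℂ) b)).const_sub 1
        have h2 := h1.cpow_const (c := c) (Complex.mem_slitPlane_iff.mpr (Or.inl (hwre z hz)))
        have h3 := (h2.neg).div_const ((starRingEnd ℂ) b * c)
        refine h3.congr_deriv ?_
        have hw0 : (1 - (starRingEnd ℂ) b * z) ≠ 0 := by
          intro h; have := hwre z hz; rw [h] at this; simp at this
        have hc1 : c - 1 = -(α:ℂ) := by rw [hcdef]; ring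
        rw [hc1]
        field_simp
      have hnorm : ∀ z ∈ Metric.ball (0:ℂ) 1,
          ‖deriv f z‖ = ‖1 - (starRingEnd ℂ) b * z‖ ^ (-α) := by
        intro z hz
        rw [(hderiv z hz).deriv]
        have : (-(α:ℂ)) = ((-α : ℝ) : ℂ) := by push_cast; ring
        rw [this, Complex.norm_cpow_real]
      have hfd : DifferentiableOn ℂ f (Metric.ball (0:ℂ) 1) :=
        fun z hz => (hderiv z hz).differentiableAt.differentiableWithinAt
      have hMb : ∀ z ∈ Metric.ball (0:ℂ) 1, (1 - ‖z‖ ^ 2) ^ α * ‖deriv f z‖ ≤ 2 ^ α := by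
        intro z hz
        rw [hnorm z hz]
        set t := ‖1 - (starRingEnd ℂ) b * z‖ with htdef
        have ht : 0 < t := by
          have := hwre z hz
          calc (0:ℝ) < (1 - (starRingEnd ℂ) b * z).re := this
            _ ≤ t := Complex.re_le_norm _
        have h2t : 1 - ‖z‖ ^ 2 ≤ 2 * t := by
          have hre : (1 - (starRingEnd ℂ) b * z).re ≤ t := Complex.re_le_norm _
          have hz1 : ‖z‖ < 1 := mem_ball_zero_iff.mp hz
          have hb1 : ‖b‖ < 1 := mem_ball_zero_iff.mp hfa
          have h1 : ((starRingEnd ℂ) b * z).re ≤ ‖b‖ * ‖z‖ := by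
            have := Complex.re_le_norm ((starRingEnd ℂ) b * z)
            rw [norm_mul] at this
            simpa using this
          have hre2 : 1 - ‖b‖ * ‖z‖ ≤ t := by
            simp only [Complex.sub_re, Complex.one_re] at hre; linarith
          nlinarith [norm_nonneg b, norm_nonneg z]
        have hzpos := ball_pos' hz
        calc (1 - ‖z‖ ^ 2) ^ α * t ^ (-α)
            ≤ (2 * t) ^ α * t ^ (-α) := by
              apply mul_le_mul_of_nonneg_right
                (Real.rpow_le_rpow hzpos.le h2t hα0.le) (Real.rpow_nonneg ht.le _)
          _ = 2 ^ α * (t ^ α * t ^ (-α)) := by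
              rw [Real.mul_rpow (by norm_num) ht.le]; ring
          _ = 2 ^ α := by
              rw [← Real.rpow_add ht, add_neg_cancel, Real.rpow_zero, mul_one]
      have h := hbound f hfd (2 ^ α) hMb a ha
      have hda : DifferentiableAt ℂ φ a := hφd.differentiableAt (isOpen_ball.mem_nhds ha)
      have hdf : DifferentiableAt ℂ f b := (hderiv b hfa).differentiableAt
      rw [deriv_comp (x := a) hdf hda, norm_mul, hnorm b hfa] at h
      have hcb2 : 1 - (starRingEnd ℂ) b * b = ((1 - ‖b‖ ^ 2 : ℝ) : ℂ) := by
        rw [mul_comm, Complex.mul_conj, Complex.normSq_eq_norm_sq]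
        push_cast; ring
      rw [hcb2, Complex.norm_real, Real.norm_eq_abs, abs_of_pos hB] at h
      have heq : ((1 - ‖a‖ ^ 2) / (1 - ‖b‖ ^ 2)) ^ α * ‖deriv φ a‖
          = (1 - ‖a‖ ^ 2) ^ α * ((1 - ‖b‖ ^ 2) ^ (-α) * ‖deriv φ a‖) := by
        rw [Real.div_rpow hA.le hB.le, Real.rpow_neg hB.le, div_eq_mul_inv]; ring
      rw [heq]
      exact h
  · rintro ⟨K, hK⟩
    have h0mem : (0:ℂ) ∈ Metric.ball (0:ℂ) 1 := by simp
    have hA0 := ball_pos' h0mem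
    have hB0 := ball_pos' (hφm h0mem)
    have hK0 : 0 ≤ K := le_trans
      (mul_nonneg (Real.rpow_nonneg (div_nonneg hA0.le hB0.le) _) (norm_nonneg _)) (hK 0 h0mem)
    refine ⟨K + 1, by linarith, fun f hf M hM a ha => ?_⟩
    have hM0 : 0 ≤ M := le_trans
      (mul_nonneg (Real.rpow_nonneg hA0.le _) (norm_nonneg _)) (hM 0 h0mem)
    have hfa : φ a ∈ Metric.ball (0:ℂ) 1 := hφm ha
    have hda : DifferentiableAt ℂ φ a := hφd.differentiableAt (isOpen_ball.mem_nhds ha)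
    have hdf : DifferentiableAt ℂ f (φ a) := hf.differentiableAt (isOpen_ball.mem_nhds hfa)
    rw [deriv_comp (x := a) hdf hda, norm_mul]
    have h1 := hK a ha
    have h2 := hM (φ a) hfa
    have hA := ball_pos' ha
    have hB := ball_pos' hfa
    rw [Real.div_rpow hA.le hB.le] at h1
    set Ap := (1 - ‖a‖ ^ 2) ^ α with hAp
    set Bp := (1 - ‖φ a‖ ^ 2) ^ α with hBp
    have hBα : 0 < Bp := Real.rpow_pos_of_pos hB _
    have heq : Ap * (‖deriv f (φ a)‖ * ‖deriv φ a‖)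
        = (Ap / Bp * ‖deriv φ a‖) * (Bp * ‖deriv f (φ a)‖) := by
      field_simp
    rw [heq]
    calc (Ap / Bp * ‖deriv φ a‖) * (Bp * ‖deriv f (φ a)‖)
        ≤ K * M := by
          apply mul_le_mul h1 h2 (by positivity) hK0
      _ ≤ (K + 1) * M := by nlinarith
end
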